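/- arXiv:1703.09413 — 2 statements merged into one kernel-verified Lean document; each statement's English description precedes it below -/
import Mathlib

section
/- Let F be an uncountable field and let 𝒜 be a countable set of nonzero polynomials in the polynomial ring F[t₁, t₂, ...] in countably many variables. Then there exists a sequence (λᵢ)ᵢ≥₁ of elements of F such that G(λ₁, λ₂, ...) ≠ 0 for every G ∈ 𝒜. -/
open MvPolynomial

namespace Stmt3Aux

variable {F : Type*} [Field F]

/-- The equivalence `ℕ ≃ Option ℕ` sending `0 ↦ none`, `n+1 ↦ some n`. -/
def e : ℕ ≃ Option ℕ where
  toFun n := Nat.rec none (fun k _ => some k) n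
  invFun o := o.elim 0 Nat.succ
  left_inv n := by cases n <;> rfl
  right_inv o := by cases o <;> rfl

/-- View a polynomial in `t₀, t₁, …` as a polynomial in `t₀` with coefficients
in `F[t₁, t₂, …]` (with variables reindexed down by one). -/
noncomputable def Φ : MvPolynomial ℕ F →ₐ[F] Polynomial (MvPolynomial ℕ F) :=
  (optionEquivLeft F ℕ).toAlgHom.comp (rename (e : ℕ → Option ℕ))

lemma Φ_injective : Function.Injective (Φ (F := F)) := fun x y h =>
  rename_injective (e : ℕ → Option ℕ) e.injective ((optionEquivLeft F ℕ).injective h)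

/-- Substitute `t₀ := a` and shift all remaining variables down by one. -/
noncomputable def sub (a : F) (P : MvPolynomial ℕ F) : MvPolynomial ℕ F :=
  Polynomial.eval (C a) (Φ P)

lemma sub_eval (μ : ℕ → F) (P : MvPolynomial ℕ F) :
    eval μ P = eval (fun n => μ (n + 1)) (sub (μ 0) P) := by
  have : (eval μ : MvPolynomial ℕ F →+* F) =
      ((eval (fun n => μ (n + 1)) : MvPolynomial ℕ F →+* F).comp
        (Polynomial.evalRingHom (C (μ 0)))).comp (Φ (F := F) : MvPolynomial ℕ F →+* _) := by
    apply MvPolynomial.ringHom_ext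
    · intro r
      simp [Φ, optionEquivLeft_C]
    · intro n
      cases n with
      | zero =>
        have h1 : (Φ (F := F)) (X 0) = Polynomial.X := by
          simp only [Φ, AlgHom.coe_comp, AlgEquiv.toAlgHom_eq_coe, AlgHom.coe_coe,
            Function.comp_apply, rename_X]
          exact optionEquivLeft_X_none F ℕ
        simp [h1]
      | succ k =>
        have h1 : (Φ (F := F)) (X (k + 1)) = Polynomial.C (X k) := by
          simp only [Φ, AlgHom.coe_comp, AlgEquiv.toAlgHom_eq_coe, AlgHom.coe_coe,
            Function.comp_apply, rename_X]
          exact optionEquivLeft_X_some F ℕ k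
        simp [h1]
  exact DFunLike.congr_fun this P

lemma sub_finite {P : MvPolynomial ℕ F} (hP : P ≠ 0) :
    {a : F | sub a P = 0}.Finite := by
  have hΦ : Φ (F := F) P ≠ 0 := fun h => hP (Φ_injective (by simp [h]))
  have hfin : {x : MvPolynomial ℕ F | (Φ (F := F) P).IsRoot x}.Finite :=
    Polynomial.finite_setOf_isRoot hΦ
  have : {a : F | sub a P = 0} = (C : F → MvPolynomial ℕ F) ⁻¹'
      {x : MvPolynomial ℕ F | (Φ (F := F) P).IsRoot x} := rfl
  rw [this]
  exact hfin.preimage (Set.injOn_of_injective (C_injective ℕ F))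

/-- `sub a` agrees with `bind₁` of the obvious substitution. -/
lemma sub_eq_bind₁ (a : F) (P : MvPolynomial ℕ F) :
    sub a P = bind₁ (fun n => Nat.rec (C a) (fun k _ => X k) n : ℕ → MvPolynomial ℕ F) P := by
  have : ((Polynomial.evalRingHom (C a)).comp (Φ (F := F) : MvPolynomial ℕ F →+* _)) =
      (bind₁ (fun n => Nat.rec (C a) (fun k _ => X k) n : ℕ → MvPolynomial ℕ F) :
        MvPolynomial ℕ F →+* MvPolynomial ℕ F) := by
    apply MvPolynomial.ringHom_ext
    · intro r
      simp [Φ, optionEquivLeft_C]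
    · intro n
      cases n with
      | zero =>
        have h1 : (Φ (F := F)) (X 0) = Polynomial.X := by
          simp only [Φ, AlgHom.coe_comp, AlgEquiv.toAlgHom_eq_coe, AlgHom.coe_coe,
            Function.comp_apply, rename_X]
          exact optionEquivLeft_X_none F ℕ
        simp [h1]
      | succ k =>
        have h1 : (Φ (F := F)) (X (k + 1)) = Polynomial.C (X k) := by
          simp only [Φ, AlgHom.coe_comp, AlgEquiv.toAlgHom_eq_coe, AlgHom.coe_coe,
            Function.comp_apply, rename_X]
          exact optionEquivLeft_X_some F ℕ k
        simp [h1]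
  exact DFunLike.congr_fun this P

lemma sub_vars (a : F) (P : MvPolynomial ℕ F) {i : ℕ}
    (hi : i ∈ (sub a P).vars) : i + 1 ∈ P.vars := by
  rw [sub_eq_bind₁] at hi
  obtain ⟨j, hj, hij⟩ := mem_vars_bind₁ _ _ hi
  cases j with
  | zero => simp [vars_C] at hij
  | succ k =>
    have : i ∈ (X k : MvPolynomial ℕ F).vars := hij
    rw [vars_X] at this
    simp only [Finset.mem_singleton] at this
    subst this
    exact hj

lemma eq_C_of_vars_empty {P : MvPolynomial ℕ F} (h : P.vars = ∅) :
    P = C (constantCoeff P) := by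
  ext m
  rw [coeff_C]
  split_ifs with hm
  · subst hm; rfl
  · by_contra hc
    have hm' : m ∈ P.support := by
      rw [mem_support_iff]; exact fun h' => hc (h'.symm ▸ rfl)
    obtain ⟨i, hi⟩ : m.support.Nonempty := by
      rw [Finsupp.support_nonempty_iff]
      exact fun h' => hm h'.symm
    have : i ∈ P.vars := (mem_vars i).mpr ⟨m, hm', hi⟩
    simp [h] at this

end Stmt3Aux

theorem stmt_3 {F : Type*} [Field F] [Uncountable F]
    (𝒜 : Set (MvPolynomial ℕ F)) (hc : 𝒜.Countable) (h0 : ∀ G ∈ 𝒜, G ≠ 0) :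
    ∃ lam : ℕ → F, ∀ G ∈ 𝒜, MvPolynomial.eval lam G ≠ 0 := by
  classical
  haveI : Countable ↥𝒜 := hc.to_subtype
  open Stmt3Aux in
  -- key choice step
  have key : ∀ (p : ↥𝒜 → MvPolynomial ℕ F), (∀ G, p G ≠ 0) →
      ∃ a : F, ∀ G, sub a (p G) ≠ 0 := by
    intro p hp
    have hbad : (⋃ G : ↥𝒜, {a : F | sub a (p G) = 0}).Countable :=
      Set.countable_iUnion fun G => (sub_finite (hp G)).countable
    have hne : (⋃ G : ↥𝒜, {a : F | sub a (p G) = 0}) ≠ Set.univ := by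
      intro h
      exact Set.not_countable_univ (h ▸ hbad)
    obtain ⟨a, ha⟩ := Set.ne_univ_iff_exists_notMem _ |>.mp hne
    refine ⟨a, fun G hG => ha ?_⟩
    exact Set.mem_iUnion.mpr ⟨G, hG⟩
  obtain ⟨lam, p, hp0, hpsucc, hpne⟩ :
      ∃ (lam : ℕ → F) (p : ℕ → ↥𝒜 → MvPolynomial ℕ F),
        (∀ G, p 0 G = (G : MvPolynomial ℕ F)) ∧
        (∀ n G, p (n + 1) G = Stmt3Aux.sub (lam n) (p n G)) ∧
        (∀ n G, p n G ≠ 0) := by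
    choose f hf using key
    let state : ℕ → {q : ↥𝒜 → MvPolynomial ℕ F // ∀ G, q G ≠ 0} :=
      fun n => Nat.rec ⟨fun G => (G : MvPolynomial ℕ F), fun G => h0 G.1 G.2⟩
        (fun _ s => ⟨fun G => Stmt3Aux.sub (f s.1 s.2) (s.1 G), fun G => hf s.1 s.2 G⟩) n
    exact ⟨fun n => f (state n).1 (state n).2, fun n => (state n).1,
      fun G => rfl, fun n G => rfl, fun n G => (state n).2 G⟩
  -- evaluation relation
  have claim1 : ∀ n (G : ↥𝒜),
      MvPolynomial.eval lam (G : MvPolynomial ℕ F) =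
        MvPolynomial.eval (fun k => lam (k + n)) (p n G) := by
    intro n
    induction n with
    | zero =>
      intro G
      rw [hp0 G]
      congr 1
    | succ n ih =>
      intro G
      rw [ih G, hpsucc n G]
      have h1 := sub_eval (fun k => lam (k + n)) (p n G)
      simp only [Nat.zero_add] at h1
      rw [h1]
      have e3 : (fun k => lam (k + 1 + n)) = (fun k => lam (k + (n + 1))) := by
        funext k; congr 1; omega
      rw [e3]
  -- variable shifting
  have claim2 : ∀ n (G : ↥𝒜) (i : ℕ), i ∈ (p n G).vars →
      i + n ∈ (G : MvPolynomial ℕ F).vars := by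
    intro n
    induction n with
    | zero => intro G i hi; rw [hp0 G] at hi; exact hi
    | succ n ih =>
      intro G i hi
      rw [hpsucc n G] at hi
      have := ih G (i + 1) (sub_vars _ _ hi)
      have harith : i + 1 + n = i + (n + 1) := by ring
      rwa [harith] at this
  refine ⟨lam, fun G hG => ?_⟩
  obtain ⟨N, hNbig⟩ : ∃ N : ℕ, ∀ i : ℕ, i + N ∉ G.vars :=
    ⟨G.vars.sup id + 1, fun i h => by
      have h2 : i + (G.vars.sup id + 1) ≤ G.vars.sup id := Finset.le_sup (f := id) h
      omega⟩
  have hempty : (p N ⟨G, hG⟩).vars = ∅ := by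
    rw [Finset.eq_empty_iff_forall_notMem]
    intro i hi
    exact hNbig i (claim2 N ⟨G, hG⟩ i hi)
  have hC : p N ⟨G, hG⟩ =
      MvPolynomial.C (MvPolynomial.constantCoeff (p N ⟨G, hG⟩)) :=
    Stmt3Aux.eq_C_of_vars_empty hempty
  have hc0 : MvPolynomial.constantCoeff (p N ⟨G, hG⟩) ≠ 0 := by
    intro h
    exact hpne N ⟨G, hG⟩ (by rw [hC, h, map_zero])
  have hfin : MvPolynomial.eval lam G =
      MvPolynomial.eval (fun k => lam (k + N)) (p N ⟨G, hG⟩) := claim1 N ⟨G, hG⟩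
  rw [hfin, hC]
  simpa using hc0
end

section
/- Let F be an uncountable field. Then for any countable family (Gₖ) of nonzero multivariate polynomials over F in countably many variables, the set of common non-vanishing points {f : ℕ → F | Gₖ(f) ≠ 0 for all k} is nonempty. -/
open MvPolynomial

namespace Stmt16Aux

variable {F : Type*} [Field F]

/-- An equiv `ℕ ≃ Option ℕ` sending `0` to `none`. -/
def e0 : ℕ ≃ Option ℕ where
  toFun := fun m => match m with
    | 0 => none
    | m + 1 => some m
  invFun := fun o => o.elim 0 (· + 1)
  left_inv := by rintro (_ | m) <;> rfl
  right_inv := by rintro (_ | m) <;> rfl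

/-- An equiv `ℕ ≃ Option ℕ` sending `n` to `none`. -/
def en (n : ℕ) : ℕ ≃ Option ℕ := (Equiv.swap n 0).trans e0

lemma en_self (n : ℕ) : en n n = none := by simp [en, e0]

/-- The set of `a` making a one-variable substitution kill a nonzero polynomial is finite. -/
lemma finite_bad (n : ℕ) {P : MvPolynomial ℕ F} (hP : P ≠ 0) :
    {a : F | bind₁ (Function.update X n (C a)) P = 0}.Finite := by
  classical
  set e := en n with he
  set h : ℕ → ℕ := fun i => (e i).getD 0 with hh
  have hsome : ∀ i, i ≠ n → e i = some (h i) := by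
    intro i hi
    have : e i ≠ none := by
      rw [← en_self n]
      exact fun hc => hi (e.injective hc)
    rcases Option.ne_none_iff_exists'.mp this with ⟨m, hm⟩
    simp [hh, hm]
  set Q : Polynomial (MvPolynomial ℕ F) := optionEquivLeft F ℕ (rename e P) with hQdef
  have hQ : Q ≠ 0 := by
    intro hc
    apply hP
    have h1 : rename (e : ℕ → Option ℕ) P = 0 := by
      apply (optionEquivLeft F ℕ).injective
      simpa [hQdef] using hc
    exact (MvPolynomial.rename_injective _ e.injective) (by simpa using h1)
  have key : ∀ a : F,
      (Polynomial.evalRingHom (C a : MvPolynomial ℕ F)).comp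
        ((optionEquivLeft F ℕ : MvPolynomial (Option ℕ) F ≃ₐ[F]
            Polynomial (MvPolynomial ℕ F)).toAlgHom.toRingHom.comp
          (rename (e : ℕ → Option ℕ)).toRingHom)
      = (rename h).toRingHom.comp (bind₁ (Function.update X n (C a))).toRingHom := by
    intro a
    apply MvPolynomial.ringHom_ext
    · intro b
      simp [MvPolynomial.algebraMap_eq]
    · intro i
      by_cases hi : i = n
      · subst hi
        have hni : e i = none := en_self i
        simp [hni, optionEquivLeft_X_none, Function.update_self,
          MvPolynomial.algebraMap_eq]
      · simp [hsome i hi, optionEquivLeft_X_some, Function.update_of_ne hi]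
  have hsub : {a : F | bind₁ (Function.update X n (C a)) P = 0} ⊆
      (C : F →+* MvPolynomial ℕ F) ⁻¹' {x | Q.IsRoot x} := by
    intro a ha
    have h1 := congrArg (fun φ => φ P) (key a)
    simp only [RingHom.comp_apply] at h1
    have h2 : Polynomial.eval (C a : MvPolynomial ℕ F) Q
        = rename h (bind₁ (Function.update X n (C a)) P) := h1
    have ha' : bind₁ (Function.update X n (C a)) P = 0 := ha
    simp only [Set.mem_preimage, Set.mem_setOf_eq, Polynomial.IsRoot, h2, ha', map_zero]
  exact ((Polynomial.finite_setOf_isRoot hQ).preimage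
    (MvPolynomial.C_injective ℕ F).injOn).subset hsub

variable [Uncountable F] {ι : Type*} [Countable ι]

lemma step {Q : ι → MvPolynomial ℕ F} (hQ : ∀ k, Q k ≠ 0) (n : ℕ) :
    ∃ a : F, ∀ k, bind₁ (Function.update X n (C a)) (Q k) ≠ 0 := by
  by_contra hc
  push_neg at hc
  have hcov : (Set.univ : Set F) ⊆ ⋃ k, {a : F | bind₁ (Function.update X n (C a)) (Q k) = 0} := by
    intro a _
    rcases hc a with ⟨k, hk⟩
    exact Set.mem_iUnion.mpr ⟨k, hk⟩
  have hcnt : (Set.univ : Set F).Countable :=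
    (Set.countable_iUnion fun k => (finite_bad n (hQ k)).countable).mono hcov
  exact (Set.not_countable_univ) hcnt

noncomputable def seq (G : ι → MvPolynomial ℕ F) (hG : ∀ k, G k ≠ 0) :
    ℕ → {Q : ι → MvPolynomial ℕ F // ∀ k, Q k ≠ 0}
  | 0 => ⟨G, hG⟩
  | n + 1 =>
    ⟨fun k => bind₁ (Function.update X n (C (step (seq G hG n).2 n).choose)) ((seq G hG n).1 k),
      fun k => (step (seq G hG n).2 n).choose_spec k⟩

noncomputable def fseq (G : ι → MvPolynomial ℕ F) (hG : ∀ k, G k ≠ 0) (n : ℕ) : F :=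
  (step (seq G hG n).2 n).choose

lemma seq_succ (G : ι → MvPolynomial ℕ F) (hG : ∀ k, G k ≠ 0) (n : ℕ) (k : ι) :
    (seq G hG (n + 1)).1 k
      = bind₁ (Function.update X n (C (fseq G hG n))) ((seq G hG n).1 k) := rfl

lemma eval_seq (G : ι → MvPolynomial ℕ F) (hG : ∀ k, G k ≠ 0) (n : ℕ) (k : ι) :
    eval (fseq G hG) ((seq G hG n).1 k) = eval (fseq G hG) (G k) := by
  classical
  induction n with
  | zero => rfl
  | succ n ih =>
    rw [seq_succ, ← ih]
    have haev : ∀ p : MvPolynomial ℕ F, eval (fseq G hG) p = aeval (fseq G hG) p := fun p => by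
      rw [← coe_aeval_eq_eval]; rfl
    rw [haev, haev, aeval_bind₁]
    have hfun : (fun i => aeval (fseq G hG) (Function.update X n (C (fseq G hG n)) i))
        = fseq G hG := by
      funext i
      by_cases hi : i = n
      · subst hi; simp
      · simp [Function.update_of_ne hi]
    rw [hfun]

lemma vars_seq (G : ι → MvPolynomial ℕ F) (hG : ∀ k, G k ≠ 0) (n : ℕ) (k : ι) :
    ∀ i ∈ ((seq G hG n).1 k).vars, n ≤ i ∧ i ∈ (G k).vars := by
  classical
  induction n with
  | zero => exact fun i hi => ⟨Nat.zero_le i, hi⟩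
  | succ n ih =>
    intro i hi
    rw [seq_succ] at hi
    have h1 := vars_bind₁ (Function.update X n (C (fseq G hG n))) ((seq G hG n).1 k) hi
    rw [Finset.mem_biUnion] at h1
    rcases h1 with ⟨j, hj, hij⟩
    by_cases hjn : j = n
    · subst hjn
      simp [Function.update_self, vars_C] at hij
    · rw [Function.update_of_ne hjn, vars_X] at hij
      rcases Finset.mem_singleton.mp hij with rfl
      rcases ih i hj with ⟨hn, hG'⟩
      exact ⟨Nat.lt_of_le_of_ne hn (Ne.symm hjn), hG'⟩

end Stmt16Aux

theorem stmt_16 {F : Type*} [Field F] [Uncountable F]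
    {ι : Type*} [Countable ι] (G : ι → MvPolynomial ℕ F) (hG : ∀ k, G k ≠ 0) :
    {f : ℕ → F | ∀ k, MvPolynomial.eval f (G k) ≠ 0}.Nonempty := by
  classical
  refine ⟨Stmt16Aux.fseq G hG, fun k => ?_⟩
  set f := Stmt16Aux.fseq G hG with hf
  set N : ℕ := (G k).vars.sup id + 1 with hN
  set P : MvPolynomial ℕ F := (Stmt16Aux.seq G hG N).1 k with hP
  have hPne : P ≠ 0 := (Stmt16Aux.seq G hG N).2 k
  have hvars : P.vars = ∅ := by
    rw [Finset.eq_empty_iff_forall_notMem]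
    intro i hi
    rcases Stmt16Aux.vars_seq G hG N k i hi with ⟨hNi, hiG⟩
    have : i ≤ (G k).vars.sup id := Finset.le_sup (f := id) hiG
    omega
  have hC : ∃ c : F, P = MvPolynomial.C c := by
    have hmem : P ∈ MvPolynomial.supported F (∅ : Set ℕ) := by
      rw [MvPolynomial.mem_supported, hvars]
      simp
    rw [MvPolynomial.supported_empty] at hmem
    rcases Algebra.mem_bot.mp hmem with ⟨c, hc⟩
    exact ⟨c, by rw [← hc]; rfl⟩
  rcases hC with ⟨c, hc⟩
  have hev : MvPolynomial.eval f P = MvPolynomial.eval f (G k) :=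
    Stmt16Aux.eval_seq G hG N k
  rw [← hev, hc, MvPolynomial.eval_C]
  intro hc0
  apply hPne
  rw [hc, hc0, map_zero]
end
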